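/- Let C = {(x, y) ∈ ℂ² : y² = x⁵} and C̃ = {(x, y) ∈ ℂ² : y² = x³}, as germs at 0 ∈ ℂ². If α ∈ (0, 1] and there exists a bi-α-Hölder homeomorphism F : (C, 0) → (C̃, 0), then α⁴ ≤ 1/2. -/

import Mathlib

open Metric

/-- The curve `y² = x⁵` in `ℂ²`. -/
def curveC : Set (EuclideanSpace ℂ (Fin 2)) := {p | (p 1) ^ 2 = (p 0) ^ 5}

/-- The curve `y² = x³` in `ℂ²`. -/
def curveCt : Set (EuclideanSpace ℂ (Fin 2)) := {p | (p 1) ^ 2 = (p 0) ^ 3}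

/-- `(X,0)` and `(Y,0)` are bi-`α`-Hölder homeomorphic as germs. -/
def BiHolderGerm (X Y : Set (EuclideanSpace ℂ (Fin 2))) (α : ℝ) : Prop :=
  ∃ (U V : Set (EuclideanSpace ℂ (Fin 2))) (F : EuclideanSpace ℂ (Fin 2) → EuclideanSpace ℂ (Fin 2)) (c : ℝ),
    IsOpen U ∧ IsOpen V ∧ (0 : EuclideanSpace ℂ (Fin 2)) ∈ U ∧ (0 : EuclideanSpace ℂ (Fin 2)) ∈ V ∧
    0 < c ∧ F 0 = 0 ∧ Set.BijOn F (X ∩ U) (Y ∩ V) ∧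
    ∀ p ∈ X ∩ U, ∀ q ∈ X ∩ U,
      (1 / c) * ‖p - q‖ ^ (1 / α) ≤ ‖F p - F q‖ ∧ ‖F p - F q‖ ≤ c * ‖p - q‖ ^ α


noncomputable def mk2 (x y : ℂ) : EuclideanSpace ℂ (Fin 2) := WithLp.toLp 2 ![x, y]

lemma mk2_apply_zero (x y : ℂ) : mk2 x y 0 = x := rfl
lemma mk2_apply_one (x y : ℂ) : mk2 x y 1 = y := rfl

lemma eq_mk2 (z : EuclideanSpace ℂ (Fin 2)) : z = mk2 (z 0) (z 1) := by
  ext i; fin_cases i <;> rfl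

lemma mk2_zero : mk2 0 0 = 0 := (eq_mk2 0).symm

lemma sub_mk2 (x y x' y' : ℂ) : mk2 x y - mk2 x' y' = mk2 (x - x') (y - y') := by
  ext i; fin_cases i <;> rfl

lemma norm_mk2 (x y : ℂ) : ‖mk2 x y‖ = Real.sqrt (‖x‖^2 + ‖y‖^2) := by
  rw [EuclideanSpace.norm_eq]
  simp [Fin.sum_univ_two, mk2]

lemma norm_mk2_le (x y : ℂ) : ‖mk2 x y‖ ≤ ‖x‖ + ‖y‖ := by
  rw [norm_mk2]
  have h := Real.sqrt_le_sqrt (show ‖x‖^2 + ‖y‖^2 ≤ (‖x‖ + ‖y‖)^2 by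
    nlinarith [norm_nonneg x, norm_nonneg y])
  calc Real.sqrt (‖x‖^2 + ‖y‖^2) ≤ Real.sqrt ((‖x‖+‖y‖)^2) := h
    _ = ‖x‖ + ‖y‖ := Real.sqrt_sq (by positivity)

lemma coord_le_norm (z : EuclideanSpace ℂ (Fin 2)) (i : Fin 2) : ‖z i‖ ≤ ‖z‖ := by
  rw [EuclideanSpace.norm_eq z]
  have h : ‖z i‖^2 ≤ ∑ j, ‖z j‖^2 := by
    have := Finset.single_le_sum (f := fun j => ‖z j‖^2) (fun j _ => by positivity)
      (Finset.mem_univ i)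
    simpa using this
  calc ‖z i‖ = Real.sqrt (‖z i‖^2) := (Real.sqrt_sq (norm_nonneg _)).symm
    _ ≤ _ := Real.sqrt_le_sqrt h

lemma sub_apply2 (z w : EuclideanSpace ℂ (Fin 2)) (i : Fin 2) : (z - w) i = z i - w i := rfl

lemma sheet (a b : ℂ) (d : ℝ) (ha : a ≠ 0) (ha1 : ‖a‖ ≤ 1)
    (h1 : ‖a^2 - b^2‖ ≤ d) (h2 : ‖a^3 - b^3‖ ≤ d) (hd : 26*d ≤ ‖a‖^3) :
    ‖a - b‖ ≤ ‖a‖/2 ∧ ‖a - b‖ * ‖a‖ ≤ d := by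
  have hapos : 0 < ‖a‖ := norm_pos_iff.mpr ha
  have hdnn : 0 ≤ d := le_trans (norm_nonneg _) h1
  have hmul : ‖a - b‖ * ‖a + b‖ ≤ d := by
    have h : (a - b) * (a + b) = a^2 - b^2 := by ring
    calc ‖a - b‖ * ‖a + b‖ = ‖(a-b)*(a+b)‖ := (norm_mul _ _).symm
      _ = ‖a^2 - b^2‖ := by rw [h]
      _ ≤ d := h1
  by_cases hab : ‖a - b‖ ≤ ‖a‖/2
  · refine ⟨hab, ?_⟩
    have haab : ‖a‖ ≤ ‖a + b‖ := by
      have h : a + b = 2*a - (a - b) := by ring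
      rw [h]
      have h2a : ‖(2:ℂ)*a‖ = 2*‖a‖ := by rw [norm_mul]; simp
      have := norm_sub_norm_le (2*a) (a-b)
      linarith
    calc ‖a - b‖ * ‖a‖ ≤ ‖a - b‖ * ‖a + b‖ :=
          mul_le_mul_of_nonneg_left haab (norm_nonneg _)
      _ ≤ d := hmul
  · exfalso
    push_neg at hab
    have habpos : 0 < ‖a - b‖ := lt_of_le_of_lt (by positivity) hab
    have hsum : ‖a + b‖ ≤ 2*d/‖a‖ := by
      have h' : ‖a + b‖ * (‖a‖/2) ≤ d := by
        calc ‖a + b‖ * (‖a‖/2) ≤ ‖a + b‖ * ‖a - b‖ :=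
              mul_le_mul_of_nonneg_left hab.le (norm_nonneg _)
          _ = ‖a - b‖ * ‖a + b‖ := by ring
          _ ≤ d := hmul
      rw [le_div_iff₀ hapos]
      nlinarith [norm_nonneg (a+b)]
    have hb : ‖b‖ ≤ 2*‖a‖ := by
      have h : b = (a + b) - a := by ring
      rw [h]
      have h1' : ‖(a+b) - a‖ ≤ ‖a+b‖ + ‖a‖ := norm_sub_le _ _
      have h3 : 2*d/‖a‖ ≤ ‖a‖ := by
        rw [div_le_iff₀ hapos]
        nlinarith [pow_le_one₀ (n:=3) hapos.le ha1, hd, hdnn]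
      linarith
    have hcube : ‖a^3 + b^3‖ ≤ 14 * d * ‖a‖ := by
      have hfac : a^3 + b^3 = (a + b) * (a^2 - a*b + b^2) := by ring
      have hq : ‖a^2 - a*b + b^2‖ ≤ 7*‖a‖^2 := by
        calc ‖a^2 - a*b + b^2‖ ≤ ‖a^2 - a*b‖ + ‖b^2‖ := norm_add_le _ _
          _ ≤ ‖a^2‖ + ‖a*b‖ + ‖b^2‖ := by linarith [norm_sub_le (a^2) (a*b)]
          _ ≤ ‖a‖^2 + ‖a‖*(2*‖a‖) + (2*‖a‖)^2 := by
              have e1 : ‖a^2‖ = ‖a‖^2 := by rw [norm_pow]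
              have e2 : ‖a*b‖ = ‖a‖*‖b‖ := norm_mul _ _
              have e3 : ‖b^2‖ = ‖b‖^2 := by rw [norm_pow]
              have h4 : ‖b‖^2 ≤ (2*‖a‖)^2 := by nlinarith [norm_nonneg b]
              nlinarith [norm_nonneg a, norm_nonneg b]
          _ = 7*‖a‖^2 := by ring
      calc ‖a^3 + b^3‖ = ‖a + b‖ * ‖a^2 - a*b + b^2‖ := by rw [hfac, norm_mul]
        _ ≤ (2*d/‖a‖) * (7*‖a‖^2) := by
            apply mul_le_mul hsum hq (norm_nonneg _) (by positivity)
        _ = 14 * d * ‖a‖ := by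
            rw [div_mul_eq_mul_div, div_eq_iff hapos.ne']
            ring
    have hlow : 2*‖a‖^3 - 14*d*‖a‖ ≤ ‖a^3 - b^3‖ := by
      have h : a^3 - b^3 = 2*a^3 - (a^3 + b^3) := by ring
      rw [h]
      have h2a : ‖(2:ℂ)*a^3‖ = 2*‖a‖^3 := by rw [norm_mul, norm_pow]; simp
      linarith [norm_sub_norm_le (2*a^3) (a^3+b^3)]
    have h14 : 14*d*‖a‖ ≤ ‖a‖^3 := by nlinarith
    have h15 : ‖a‖^3 ≤ d := by linarith
    nlinarith [pow_pos hapos 3]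

lemma exists_t (e K : ℝ) (he : 0 < e) (hK : 0 < K) :
    ∃ t₀ > 0, ∀ t : ℝ, 0 < t → t < t₀ → t ^ e < K := by
  refine ⟨min 1 (K ^ (1/e)), lt_min one_pos (Real.rpow_pos_of_pos hK _), fun t ht htlt => ?_⟩
  have h1 : t < K ^ (1/e) := lt_of_lt_of_le htlt (min_le_right _ _)
  have h2 : t ^ e < (K ^ (1/e)) ^ e := Real.rpow_lt_rpow ht.le h1 he
  rwa [← Real.rpow_mul hK.le, one_div, inv_mul_cancel₀ he.ne', Real.rpow_one] at h2

set_option maxHeartbeats 2000000 in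
/-- If there is a bi-`α`-Hölder homeomorphism between the germs at `0` of
`y² = x⁵` and `y² = x³`, then `α⁴ ≤ 1/2`. -/
theorem biHolder_implies_alpha_pow_four_le {α : ℝ} (hα : 0 < α) (hα1 : α ≤ 1)
    (h : BiHolderGerm curveC curveCt α) : α ^ 4 ≤ 1 / 2 := by
  by_contra hcon
  push_neg at hcon
  have hα2 : 3/5 < α^2 := by nlinarith [sq_nonneg α, sq_nonneg (α^2 - 3/5)]
  have he1 : 0 < 5*α - 3/α := by
    have h' : 5*α - 3/α = (5*α^2 - 3)/α := by field_simp
    rw [h']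
    apply div_pos (by nlinarith) hα
  have he2 : 0 < 5*α^2 - 2 := by nlinarith
  obtain ⟨U, V, F, c, hU, hV, h0U, h0V, hc, hF0, hbij, hHol⟩ := h
  obtain ⟨εU, hεU, hUb⟩ := Metric.isOpen_iff.mp hU 0 h0U
  obtain ⟨εV, hεV, hVb⟩ := Metric.isOpen_iff.mp hV 0 h0V
  -- choose t small
  obtain ⟨T0, hT0, H0⟩ := exists_t 1 1 one_pos one_pos
  obtain ⟨T1, hT1, H1⟩ := exists_t 2 (εU/2) two_pos (by positivity)
  obtain ⟨T2, hT2, H2⟩ := exists_t (2*α) (c * (2:ℝ)^α)⁻¹ (by positivity) (by positivity)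
  obtain ⟨T3, hT3, H3⟩ := exists_t (2*α) (εV / (6*c*(2:ℝ)^α)) (by positivity) (by positivity)
  obtain ⟨T4, hT4, H4⟩ := exists_t (5*α - 3/α) (52*c*(2*c)^((3:ℝ)/2))⁻¹ he1 (by positivity)
  obtain ⟨T5, hT5, H5⟩ := exists_t (5*α^2 - 2) (((20*c^2)^α)⁻¹) he2 (by positivity)
  set t : ℝ := min T0 (min T1 (min T2 (min T3 (min T4 T5)))) / 2 with htdef
  have ht : 0 < t := by positivity
  have htlt : ∀ T, min T0 (min T1 (min T2 (min T3 (min T4 T5)))) ≤ T → t < T := by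
    intro T hT
    calc t < min T0 (min T1 (min T2 (min T3 (min T4 T5)))) := by
          rw [htdef]; exact half_lt_self (by positivity)
      _ ≤ T := hT
  have cond0 : t < 1 := by
    have := H0 t ht (htlt T0 (min_le_left _ _))
    rwa [Real.rpow_one] at this
  have cond1 : t ^ (2:ℝ) < εU/2 :=
    H1 t ht (htlt T1 (le_trans (min_le_right _ _) (min_le_left _ _)))
  have cond2 : t ^ (2*α) < (c * (2:ℝ)^α)⁻¹ :=
    H2 t ht (htlt T2 (le_trans (min_le_right _ _) (le_trans (min_le_right _ _) (min_le_left _ _))))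
  have cond3 : t ^ (2*α) < εV / (6*c*(2:ℝ)^α) :=
    H3 t ht (htlt T3 (le_trans (min_le_right _ _) (le_trans (min_le_right _ _)
      (le_trans (min_le_right _ _) (min_le_left _ _)))))
  have cond4 : t ^ (5*α - 3/α) < (52*c*(2*c)^((3:ℝ)/2))⁻¹ :=
    H4 t ht (htlt T4 (le_trans (min_le_right _ _) (le_trans (min_le_right _ _)
      (le_trans (min_le_right _ _) (le_trans (min_le_right _ _) (min_le_left _ _))))))
  have cond5 : t ^ (5*α^2 - 2) < ((20*c^2)^α)⁻¹ :=
    H5 t ht (htlt T5 (le_trans (min_le_right _ _) (le_trans (min_le_right _ _)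
      (le_trans (min_le_right _ _) (le_trans (min_le_right _ _) (min_le_right _ _))))))
  -- rpow conversions
  have hrp2 : t ^ (2:ℝ) = t^(2:ℕ) := by
    rw [show (2:ℝ) = ((2:ℕ):ℝ) by norm_num, Real.rpow_natCast]
  -- the points
  set τ : ℂ := (t : ℂ) with hτdef
  have hτ : τ ≠ 0 := by
    simp [hτdef, Complex.ofReal_ne_zero, ht.ne']
  have hτn : ‖τ‖ = t := by
    simp [hτdef, Complex.norm_real, abs_of_pos ht]
  set p : EuclideanSpace ℂ (Fin 2) := mk2 (τ^2) (τ^5) with hpdef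
  set p' : EuclideanSpace ℂ (Fin 2) := mk2 (τ^2) (-τ^5) with hp'def
  have hpC : p ∈ curveC := by
    show (p 1)^2 = (p 0)^5
    rw [hpdef, mk2_apply_zero, mk2_apply_one]; ring
  have hp'C : p' ∈ curveC := by
    show (p' 1)^2 = (p' 0)^5
    rw [hp'def, mk2_apply_zero, mk2_apply_one]; ring
  have h0C : (0 : EuclideanSpace ℂ (Fin 2)) ∈ curveC := by
    show ((0 : EuclideanSpace ℂ (Fin 2)) 1)^2 = ((0 : EuclideanSpace ℂ (Fin 2)) 0)^5
    norm_num
  have ht5le : t^(5:ℕ) ≤ t^(2:ℕ) := pow_le_pow_of_le_one ht.le cond0.le (by norm_num)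
  have hτ2n : ‖τ^2‖ = t^(2:ℕ) := by rw [norm_pow, hτn]
  have hτ5n : ‖τ^5‖ = t^(5:ℕ) := by rw [norm_pow, hτn]
  have hnp_le : ‖p‖ ≤ 2*t^(2:ℕ) := by
    calc ‖p‖ ≤ ‖τ^2‖ + ‖τ^5‖ := norm_mk2_le _ _
      _ = t^(2:ℕ) + t^(5:ℕ) := by rw [hτ2n, hτ5n]
      _ ≤ 2*t^(2:ℕ) := by linarith
  have hnp'_le : ‖p'‖ ≤ 2*t^(2:ℕ) := by
    calc ‖p'‖ ≤ ‖τ^2‖ + ‖-τ^5‖ := norm_mk2_le _ _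
      _ = t^(2:ℕ) + t^(5:ℕ) := by rw [hτ2n, norm_neg, hτ5n]
      _ ≤ 2*t^(2:ℕ) := by linarith
  have hnp_ge : t^(2:ℕ) ≤ ‖p‖ := by
    calc t^(2:ℕ) = ‖p 0‖ := by rw [hpdef, mk2_apply_zero, hτ2n]
      _ ≤ ‖p‖ := coord_le_norm _ _
  have hpp' : ‖p - p'‖ = 2*t^(5:ℕ) := by
    have h : p - p' = mk2 0 (2*τ^5) := by
      rw [hpdef, hp'def, sub_mk2]
      congr 1 <;> ring
    rw [h, norm_mk2]
    simp only [norm_zero, norm_mul]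
    rw [hτ5n]
    rw [show ‖(2:ℂ)‖ = 2 by simp]
    rw [show (0:ℝ)^2 + (2*t^(5:ℕ))^2 = (2*t^(5:ℕ))^2 by ring]
    exact Real.sqrt_sq (by positivity)
  -- membership in U
  have h2t2 : 2*t^(2:ℕ) < εU := by
    rw [hrp2] at cond1; linarith
  have hpU : p ∈ U := hUb (by
    rw [mem_ball, dist_eq_norm, sub_zero]
    exact lt_of_le_of_lt hnp_le h2t2)
  have hp'U : p' ∈ U := hUb (by
    rw [mem_ball, dist_eq_norm, sub_zero]
    exact lt_of_le_of_lt hnp'_le h2t2)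
  have hp : p ∈ curveC ∩ U := ⟨hpC, hpU⟩
  have hp' : p' ∈ curveC ∩ U := ⟨hp'C, hp'U⟩
  have h0m : (0 : EuclideanSpace ℂ (Fin 2)) ∈ curveC ∩ U := ⟨h0C, h0U⟩
  -- images
  set P : EuclideanSpace ℂ (Fin 2) := F p with hPdef
  set P' : EuclideanSpace ℂ (Fin 2) := F p' with hP'def
  have hPmem : P ∈ curveCt ∩ V := hbij.mapsTo hp
  have hP'mem : P' ∈ curveCt ∩ V := hbij.mapsTo hp'
  have hPC : (P 1)^2 = (P 0)^3 := hPmem.1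
  have hP'C : (P' 1)^2 = (P' 0)^3 := hP'mem.1
  set d : ℝ := ‖P - P'‖ with hddef
  have hdnn : 0 ≤ d := norm_nonneg _
  -- Hölder bounds
  have ht5α : (2*t^(5:ℕ)) ^ α ≤ 2 * t ^ ((5:ℝ)*α) := by
    rw [Real.mul_rpow (by norm_num) (by positivity)]
    have h2 : (2:ℝ)^α ≤ 2 := by
      calc (2:ℝ)^α ≤ (2:ℝ)^(1:ℝ) := Real.rpow_le_rpow_of_exponent_le one_le_two hα1
        _ = 2 := Real.rpow_one 2
    have h5 : (t^(5:ℕ):ℝ)^α = t ^ ((5:ℝ)*α) := by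
      rw [← Real.rpow_natCast t 5, ← Real.rpow_mul ht.le]
      norm_num
    rw [h5]
    exact mul_le_mul_of_nonneg_right h2 (by positivity)
  have hd_up : d ≤ 2*c * t ^ ((5:ℝ)*α) := by
    have hH := (hHol p hp p' hp').2
    rw [hpp'] at hH
    calc d ≤ c * (2*t^(5:ℕ)) ^ α := hH
      _ ≤ c * (2 * t ^ ((5:ℝ)*α)) := by
          exact mul_le_mul_of_nonneg_left ht5α hc.le
      _ = 2*c * t ^ ((5:ℝ)*α) := by ring
  have h2t2α : (2*t^(2:ℕ):ℝ) ^ α = 2^α * t ^ ((2:ℝ)*α) := by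
    rw [Real.mul_rpow (by norm_num) (by positivity)]
    congr 1
    rw [← Real.rpow_natCast t 2, ← Real.rpow_mul ht.le]
    norm_num
  have hP_up : ‖P‖ ≤ c * (2^α * t ^ ((2:ℝ)*α)) := by
    have hH := (hHol p hp 0 h0m).2
    rw [hF0, sub_zero, sub_zero] at hH
    calc ‖P‖ ≤ c * ‖p‖ ^ α := hH
      _ ≤ c * (2*t^(2:ℕ)) ^ α := by
          apply mul_le_mul_of_nonneg_left _ hc.le
          exact Real.rpow_le_rpow (norm_nonneg _) hnp_le hα.le
      _ = c * (2^α * t ^ ((2:ℝ)*α)) := by rw [h2t2α]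
  have hP_up1 : ‖P‖ < 1 := by
    have h1 : c * 2^α * t ^ ((2:ℝ)*α) < 1 := by
      rw [show (2:ℝ)*α = 2*α by norm_num] at *
      have hpos : (0:ℝ) < c * (2:ℝ)^α := by positivity
      calc c * 2^α * t^(2*α) < c * 2^α * (c * (2:ℝ)^α)⁻¹ := by
            exact mul_lt_mul_of_pos_left cond2 hpos
        _ = 1 := by field_simp
    calc ‖P‖ ≤ c * (2^α * t ^ ((2:ℝ)*α)) := hP_up
      _ = c * 2^α * t ^ ((2:ℝ)*α) := by ring
      _ < 1 := h1
  have hP_low : t ^ ((2:ℝ)/α) / c ≤ ‖P‖ := by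
    have hH := (hHol p hp 0 h0m).1
    rw [hF0, sub_zero, sub_zero] at hH
    have h1 : (t^(2:ℕ):ℝ) ^ ((1:ℝ)/α) ≤ ‖p‖ ^ ((1:ℝ)/α) :=
      Real.rpow_le_rpow (by positivity) hnp_ge (by positivity)
    have h2 : (t^(2:ℕ):ℝ) ^ ((1:ℝ)/α) = t ^ ((2:ℝ)/α) := by
      rw [← Real.rpow_natCast t 2, ← Real.rpow_mul ht.le]
      norm_num [div_eq_mul_inv]
    calc t ^ ((2:ℝ)/α) / c = (1/c) * (t^(2:ℕ):ℝ) ^ ((1:ℝ)/α) := by rw [h2]; ring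
      _ ≤ (1/c) * ‖p‖ ^ ((1:ℝ)/α) := by
          apply mul_le_mul_of_nonneg_left h1 (by positivity)
      _ ≤ ‖P‖ := hH
  -- P, P' nonzero, coordinates nonzero
  have hpne : p ≠ 0 := by
    intro hh
    have : p 0 = 0 := by rw [hh]; rfl
    rw [hpdef, mk2_apply_zero] at this
    exact pow_ne_zero 2 hτ this
  have hp'ne : p' ≠ 0 := by
    intro hh
    have : p' 0 = 0 := by rw [hh]; rfl
    rw [hp'def, mk2_apply_zero] at this
    exact pow_ne_zero 2 hτ this
  have hPne : P ≠ 0 := by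
    intro hh
    apply hpne
    apply hbij.injOn hp h0m
    rw [hF0, ← hPdef, hh]
  have hP'ne : P' ≠ 0 := by
    intro hh
    apply hp'ne
    apply hbij.injOn hp' h0m
    rw [hF0, ← hP'def, hh]
  have hX1 : P 0 ≠ 0 := by
    intro hh
    apply hPne
    have hy : P 1 = 0 := by
      have := hPC
      rw [hh] at this
      simpa [pow_eq_zero_iff] using this
    rw [eq_mk2 P, hh, hy, mk2_zero]
  have hX2 : P' 0 ≠ 0 := by
    intro hh
    apply hP'ne
    have hy : P' 1 = 0 := by
      have := hP'C
      rw [hh] at this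
      simpa [pow_eq_zero_iff] using this
    rw [eq_mk2 P', hh, hy, mk2_zero]
  -- the branch parameters
  set a : ℂ := P 1 / P 0 with hadef
  set b : ℂ := P' 1 / P' 0 with hbdef
  have ha2 : a^2 = P 0 := by
    rw [hadef, div_pow, hPC]
    field_simp
  have ha3 : a^3 = P 1 := by
    rw [hadef, div_pow]
    rw [show (P 1)^3 = (P 1)^2 * P 1 by ring, hPC]
    field_simp
  have hb2 : b^2 = P' 0 := by
    rw [hbdef, div_pow, hP'C]
    field_simp
  have hb3 : b^3 = P' 1 := by
    rw [hbdef, div_pow]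
    rw [show (P' 1)^3 = (P' 1)^2 * P' 1 by ring, hP'C]
    field_simp
  have hane : a ≠ 0 := by
    intro hh
    apply hX1
    rw [← ha2, hh]
    ring
  have hbne : b ≠ 0 := by
    intro hh
    apply hX2
    rw [← hb2, hh]
    ring
  have hna2 : ‖a‖^2 = ‖P 0‖ := by rw [← norm_pow, ha2]
  have hnale : ‖a‖ ≤ 1 := by
    have h1 : ‖a‖^2 ≤ 1 := by
      rw [hna2]
      exact le_trans (coord_le_norm P 0) hP_up1.le
    nlinarith [norm_nonneg a]
  have hapos : 0 < ‖a‖ := norm_pos_iff.mpr hane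
  have hPa : ‖P‖ ≤ 2*‖a‖^2 := by
    have h1 : ‖P‖ ≤ ‖P 0‖ + ‖P 1‖ := by
      calc ‖P‖ = ‖mk2 (P 0) (P 1)‖ := by rw [← eq_mk2 P]
        _ ≤ ‖P 0‖ + ‖P 1‖ := norm_mk2_le _ _
    have h2 : ‖P 1‖ = ‖a‖^3 := by rw [← ha3, norm_pow]
    have h3 : ‖a‖^3 ≤ ‖a‖^2 := pow_le_pow_of_le_one (norm_nonneg a) hnale (by norm_num)
    rw [← hna2] at h1
    linarith
  have ha2_low : t ^ ((2:ℝ)/α) / (2*c) ≤ ‖a‖^2 := by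
    have := hP_low
    have h1 : t ^ ((2:ℝ)/α) / (2*c) = (t ^ ((2:ℝ)/α) / c)/2 := by ring
    linarith [hP_low, hPa]
  have ha3_low : t ^ ((3:ℝ)/α) / (2*c)^((3:ℝ)/2) ≤ ‖a‖^3 := by
    have key : ((‖a‖^(2:ℕ):ℝ))^((3:ℝ)/2) = ‖a‖^(3:ℕ) := by
      rw [← Real.rpow_natCast ‖a‖ 2, ← Real.rpow_mul (norm_nonneg a)]
      rw [show ((2:ℕ):ℝ)*((3:ℝ)/2) = ((3:ℕ):ℝ) by norm_num, Real.rpow_natCast]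
    have lhs_eq : (t^((2:ℝ)/α)/(2*c))^((3:ℝ)/2) = t^((3:ℝ)/α)/(2*c)^((3:ℝ)/2) := by
      rw [Real.div_rpow (by positivity) (by positivity)]
      congr 1
      rw [← Real.rpow_mul ht.le]
      congr 1
      field_simp
    calc t^((3:ℝ)/α)/(2*c)^((3:ℝ)/2) = (t^((2:ℝ)/α)/(2*c))^((3:ℝ)/2) := lhs_eq.symm
      _ ≤ ((‖a‖^(2:ℕ):ℝ))^((3:ℝ)/2) := Real.rpow_le_rpow (by positivity) ha2_low (by norm_num)
      _ = ‖a‖^(3:ℕ) := key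
  have hd26 : 26*d ≤ ‖a‖^3 := by
    have hsplit : t ^ ((5:ℝ)*α) = t ^ (5*α - 3/α) * t ^ ((3:ℝ)/α) := by
      rw [← Real.rpow_add ht]
      congr 1
      ring
    have hKd : (0:ℝ) < (52*c*(2*c)^((3:ℝ)/2))⁻¹ := by positivity
    have h1 : 26*d ≤ 52*c * t ^ ((5:ℝ)*α) := by linarith [hd_up]
    have h2 : 52*c * t ^ ((5:ℝ)*α) ≤ t^((3:ℝ)/α)/(2*c)^((3:ℝ)/2) := by
      rw [hsplit]
      have h3 : 52*c * (t ^ (5*α - 3/α) * t ^ ((3:ℝ)/α))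
          ≤ 52*c * ((52*c*(2*c)^((3:ℝ)/2))⁻¹ * t ^ ((3:ℝ)/α)) := by
        apply mul_le_mul_of_nonneg_left _ (by positivity)
        apply mul_le_mul_of_nonneg_right cond4.le (by positivity)
      calc 52*c * (t ^ (5*α - 3/α) * t ^ ((3:ℝ)/α))
          ≤ 52*c * ((52*c*(2*c)^((3:ℝ)/2))⁻¹ * t ^ ((3:ℝ)/α)) := h3
        _ = t^((3:ℝ)/α)/(2*c)^((3:ℝ)/2) := by
            field_simp
    linarith [ha3_low]
  have h1b : ‖a^2 - b^2‖ ≤ d := by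
    rw [ha2, hb2, ← sub_apply2]
    exact coord_le_norm _ _
  have h2b : ‖a^3 - b^3‖ ≤ d := by
    rw [ha3, hb3, ← sub_apply2]
    exact coord_le_norm _ _
  obtain ⟨habhalf, habmul⟩ := sheet a b d hane hnale h1b h2b hd26
  have hab : ‖a - b‖ ≤ d / ‖a‖ := (le_div_iff₀ hapos).mpr habmul
  -- the path on the image curve
  set v : ℝ → ℂ := fun s => a + (s:ℂ)*(b - a) with hvdef
  set γ : ℝ → EuclideanSpace ℂ (Fin 2) := fun s => mk2 ((v s)^2) ((v s)^3) with hγdef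
  have hγ_apply0 : ∀ s, γ s 0 = (v s)^2 := fun s => mk2_apply_zero _ _
  have hγ_apply1 : ∀ s, γ s 1 = (v s)^3 := fun s => mk2_apply_one _ _
  have hvs_a : ∀ s ∈ Set.Icc (0:ℝ) 1, ‖v s - a‖ ≤ ‖a - b‖ := by
    intro s hs
    have h : v s - a = (s:ℂ)*(b - a) := by rw [hvdef]; ring
    rw [h, norm_mul, norm_sub_rev b a]
    have hsn : ‖(s:ℂ)‖ ≤ 1 := by
      rw [Complex.norm_real, Real.norm_eq_abs, abs_of_nonneg hs.1]
      exact hs.2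
    calc ‖(s:ℂ)‖ * ‖a - b‖ ≤ 1 * ‖a - b‖ :=
          mul_le_mul_of_nonneg_right hsn (norm_nonneg _)
      _ = ‖a - b‖ := one_mul _
  have hvab : ∀ s ∈ Set.Icc (0:ℝ) 1, ‖v s - a‖ ≤ d/‖a‖ :=
    fun s hs => le_trans (hvs_a s hs) hab
  have hv_half : ∀ s ∈ Set.Icc (0:ℝ) 1, ‖v s - a‖ ≤ ‖a‖/2 :=
    fun s hs => le_trans (hvs_a s hs) habhalf
  have hv_low : ∀ s ∈ Set.Icc (0:ℝ) 1, ‖a‖/2 ≤ ‖v s‖ := by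
    intro s hs
    have h1 := norm_sub_norm_le a (v s)
    have h2 : ‖a - v s‖ = ‖v s - a‖ := norm_sub_rev _ _
    have h3 := hv_half s hs
    linarith only [h1, h2, h3]
  have hv_up : ∀ s ∈ Set.Icc (0:ℝ) 1, ‖v s‖ ≤ 3/2*‖a‖ := by
    intro s hs
    have h1 := norm_add_le (v s - a) a
    have h2 : v s - a + a = v s := by ring
    rw [h2] at h1
    have h3 := hv_half s hs
    linarith only [h1, h3]
  have hγC : ∀ s, γ s ∈ curveCt := by
    intro s
    show (γ s 1)^2 = (γ s 0)^3
    rw [hγ_apply0, hγ_apply1]; ring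
  have hPmk : P = mk2 (a^2) (a^3) := by rw [ha2, ha3]; exact eq_mk2 P
  have hP'mk : P' = mk2 (b^2) (b^3) := by rw [hb2, hb3]; exact eq_mk2 P'
  have hγP : ∀ s ∈ Set.Icc (0:ℝ) 1, ‖γ s - P‖ ≤ 10*d := by
    intro s hs
    have hsub : γ s - P = mk2 ((v s)^2 - a^2) ((v s)^3 - a^3) := by
      rw [hPmk, hγdef, sub_mk2]
    have hA : ‖v s - a‖ * ‖a‖ ≤ d := by
      have := hvab s hs
      calc ‖v s - a‖ * ‖a‖ ≤ (d/‖a‖) * ‖a‖ := mul_le_mul_of_nonneg_right this (norm_nonneg _)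
        _ = d := div_mul_cancel₀ d hapos.ne'
    have he1 : ‖(v s)^2 - a^2‖ ≤ (5/2)*d := by
      have hf : (v s)^2 - a^2 = (v s - a) * (v s + a) := by ring
      rw [hf, norm_mul]
      have hb1 : ‖v s + a‖ ≤ (5/2)*‖a‖ := by
        have n1 := norm_add_le (v s) a
        have n2 := hv_up s hs
        linarith only [n1, n2]
      calc ‖v s - a‖ * ‖v s + a‖ ≤ ‖v s - a‖ * ((5/2)*‖a‖) :=
            mul_le_mul_of_nonneg_left hb1 (norm_nonneg _)
        _ = (5/2) * (‖v s - a‖ * ‖a‖) := by ring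
        _ ≤ (5/2)*d := by linarith only [hA]
    have he2 : ‖(v s)^3 - a^3‖ ≤ (19/4)*d := by
      have hf : (v s)^3 - a^3 = (v s - a) * ((v s)^2 + (v s)*a + a^2) := by ring
      rw [hf, norm_mul]
      have hb1 : ‖(v s)^2 + (v s)*a + a^2‖ ≤ (19/4)*‖a‖ := by
        have hvu := hv_up s hs
        have hvn := norm_nonneg (v s)
        have han := norm_nonneg a
        have t1 : ‖(v s)^2‖ = ‖v s‖^2 := norm_pow _ _
        have t2 : ‖(v s)*a‖ = ‖v s‖*‖a‖ := norm_mul _ _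
        have t3 : ‖a^2‖ = ‖a‖^2 := norm_pow _ _
        have h4 : ‖(v s)^2 + (v s)*a + a^2‖ ≤ ‖(v s)^2‖ + ‖(v s)*a‖ + ‖a^2‖ := by
          calc ‖(v s)^2 + (v s)*a + a^2‖ ≤ ‖(v s)^2 + (v s)*a‖ + ‖a^2‖ := norm_add_le _ _
            _ ≤ ‖(v s)^2‖ + ‖(v s)*a‖ + ‖a^2‖ := by linarith [norm_add_le ((v s)^2) ((v s)*a)]
        rw [t1, t2, t3] at h4
        -- ‖vs‖² + ‖vs‖‖a‖ + ‖a‖² ≤ (9/4+3/2+1)‖a‖² = 19/4 ‖a‖² ≤ 19/4 ‖a‖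
        have h5 : ‖v s‖^2 + ‖v s‖*‖a‖ + ‖a‖^2 ≤ (19/4)*‖a‖^2 := by
          nlinarith only [hvu, hvn, han]
        have h6 : (19/4)*‖a‖^2 ≤ (19/4)*‖a‖ := by nlinarith only [hnale, han]
        linarith only [h4, h5, h6]
      calc ‖v s - a‖ * ‖(v s)^2 + (v s)*a + a^2‖ ≤ ‖v s - a‖ * ((19/4)*‖a‖) :=
            mul_le_mul_of_nonneg_left hb1 (norm_nonneg _)
        _ = (19/4) * (‖v s - a‖ * ‖a‖) := by ring
        _ ≤ (19/4)*d := by linarith only [hA]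
    calc ‖γ s - P‖ = ‖mk2 ((v s)^2 - a^2) ((v s)^3 - a^3)‖ := by rw [hsub]
      _ ≤ ‖(v s)^2 - a^2‖ + ‖(v s)^3 - a^3‖ := norm_mk2_le _ _
      _ ≤ 10*d := by linarith only [he1, he2, hdnn]
  have hγV : ∀ s ∈ Set.Icc (0:ℝ) 1, γ s ∈ V := by
    intro s hs
    apply hVb
    rw [mem_ball, dist_eq_norm, sub_zero]
    have h1 : ‖γ s‖ ≤ ‖(v s)^2‖ + ‖(v s)^3‖ := norm_mk2_le _ _
    have h2 : ‖(v s)^2‖ = ‖v s‖^2 := norm_pow _ _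
    have h3 : ‖(v s)^3‖ = ‖v s‖^3 := norm_pow _ _
    have hvu := hv_up s hs
    have hvn := norm_nonneg (v s)
    have han := norm_nonneg a
    have h4 : ‖v s‖^2 ≤ (9/4)*‖a‖^2 := by nlinarith only [hvu, hvn, han]
    have h5 : ‖v s‖^3 ≤ (27/8)*‖a‖^3 := by
      have := pow_le_pow_left₀ hvn hvu 3
      calc ‖v s‖^3 ≤ (3/2*‖a‖)^3 := this
        _ = (27/8)*‖a‖^3 := by ring
    have h6 : ‖a‖^3 ≤ ‖a‖^2 := pow_le_pow_of_le_one han hnale (by norm_num)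
    have h7 : ‖γ s‖ ≤ 6*‖a‖^2 := by
      rw [h2, h3] at h1
      linarith only [h1, h4, h5, h6, sq_nonneg ‖a‖]
    have h8 : ‖a‖^2 ≤ c * (2^α * t ^ ((2:ℝ)*α)) := by
      rw [hna2]
      exact le_trans (coord_le_norm P 0) hP_up
    have h9 : 6 * (c * (2^α * t ^ ((2:ℝ)*α))) < εV := by
      have h10 : (0:ℝ) < 6*c*(2:ℝ)^α := by positivity
      rw [show (2:ℝ)*α = 2*α by norm_num]
      rw [lt_div_iff₀ h10] at cond3
      calc 6 * (c * (2^α * t ^ (2*α))) = t^(2*α) * (6*c*(2:ℝ)^α) := by ring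
        _ < εV := cond3
    linarith only [h7, h8, h9]
  have hγmem : ∀ s ∈ Set.Icc (0:ℝ) 1, γ s ∈ curveCt ∩ V :=
    fun s hs => ⟨hγC s, hγV s hs⟩
  -- the inverse map
  set G : EuclideanSpace ℂ (Fin 2) → EuclideanSpace ℂ (Fin 2) :=
    Function.invFunOn F (curveC ∩ U) with hGdef
  have hGex : ∀ Q ∈ curveCt ∩ V, ∃ z ∈ curveC ∩ U, F z = Q := by
    intro Q hQ
    obtain ⟨z, hz, hfz⟩ := hbij.surjOn hQ
    exact ⟨z, hz, hfz⟩
  have hGmem : ∀ Q ∈ curveCt ∩ V, G Q ∈ curveC ∩ U :=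
    fun Q hQ => Function.invFunOn_mem (hGex Q hQ)
  have hGright : ∀ Q ∈ curveCt ∩ V, F (G Q) = Q :=
    fun Q hQ => Function.invFunOn_eq (hGex Q hQ)
  have hGleft : ∀ z ∈ curveC ∩ U, G (F z) = z :=
    fun z hz => hbij.invOn_invFunOn.1 hz
  set q : ℝ → EuclideanSpace ℂ (Fin 2) := fun s => G (γ s) with hqdef
  have hqmem : ∀ s ∈ Set.Icc (0:ℝ) 1, q s ∈ curveC ∩ U :=
    fun s hs => hGmem _ (hγmem s hs)
  have hFq : ∀ s ∈ Set.Icc (0:ℝ) 1, F (q s) = γ s :=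
    fun s hs => hGright _ (hγmem s hs)
  -- inverse Hölder bound
  have hinv_bound : ∀ z ∈ curveC ∩ U, ∀ w ∈ curveC ∩ U,
      ‖z - w‖ ≤ (c*‖F z - F w‖)^α := by
    intro z hz w hw
    have hlow := (hHol z hz w hw).1
    have h1 : ‖z - w‖ ^ ((1:ℝ)/α) ≤ c * ‖F z - F w‖ := by
      have h2 : c * ((1/c) * ‖z - w‖ ^ (1/α)) ≤ c * ‖F z - F w‖ :=
        mul_le_mul_of_nonneg_left hlow hc.le
      have h3 : c * ((1/c) * ‖z - w‖ ^ (1/α)) = ‖z - w‖ ^ ((1:ℝ)/α) := by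
        field_simp
      linarith only [h2, h3]
    have h4 : (‖z - w‖ ^ ((1:ℝ)/α)) ^ α ≤ (c*‖F z - F w‖)^α :=
      Real.rpow_le_rpow (by positivity) h1 hα.le
    rwa [← Real.rpow_mul (norm_nonneg _), one_div, inv_mul_cancel₀ hα.ne',
      Real.rpow_one] at h4
  have hq_dist : ∀ s ∈ Set.Icc (0:ℝ) 1, ∀ s' ∈ Set.Icc (0:ℝ) 1,
      ‖q s - q s'‖ ≤ (c*‖γ s - γ s'‖)^α := by
    intro s hs s' hs'
    have := hinv_bound (q s) (hqmem s hs) (q s') (hqmem s' hs')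
    rwa [hFq s hs, hFq s' hs'] at this
  have hq_p : ∀ s ∈ Set.Icc (0:ℝ) 1, ‖q s - p‖ ≤ (c*(10*d))^α := by
    intro s hs
    have h1 := hinv_bound (q s) (hqmem s hs) p hp
    rw [hFq s hs] at h1
    calc ‖q s - p‖ ≤ (c*‖γ s - F p‖)^α := h1
      _ ≤ (c*(10*d))^α := by
          apply Real.rpow_le_rpow (by positivity) _ hα.le
          exact mul_le_mul_of_nonneg_left (hγP s hs) hc.le
  -- endpoints
  have hv0 : v 0 = a := by rw [hvdef]; push_cast; ring
  have hv1 : v 1 = b := by rw [hvdef]; push_cast; ring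
  have hγ0 : γ 0 = P := by rw [hγdef, hPmk]; simp only [hv0]
  have hγ1 : γ 1 = P' := by rw [hγdef, hP'mk]; simp only [hv1]
  have hq0 : q 0 = p := by
    rw [hqdef]
    simp only [hγ0, hPdef]
    exact hGleft p hp
  have hq1 : q 1 = p' := by
    rw [hqdef]
    simp only [hγ1, hP'def]
    exact hGleft p' hp'
  -- q s has nonzero first coordinate
  have hqx_ne : ∀ s ∈ Set.Icc (0:ℝ) 1, q s 0 ≠ 0 := by
    intro s hs hcontr
    have hqc : (q s 1)^2 = (q s 0)^5 := (hqmem s hs).1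
    rw [hcontr] at hqc
    have hy : q s 1 = 0 := by
      have : (q s 1)^2 = 0 := by rw [hqc]; ring
      exact pow_eq_zero_iff (by norm_num) |>.mp this
    have hq0' : q s = 0 := by rw [eq_mk2 (q s), hcontr, hy, mk2_zero]
    have hγ0' : γ s = 0 := by
      rw [← hFq s hs, hq0', hF0]
    have hv0' : (v s)^2 = 0 := by
      rw [← hγ_apply0 s, hγ0']
      rfl
    have hvz : v s = 0 := pow_eq_zero_iff (by norm_num) |>.mp hv0'
    have hlow' := hv_low s hs
    rw [hvz, norm_zero] at hlow'
    linarith only [hlow', hapos]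
  -- Lipschitz bound for γ
  have hγlip : ∀ s ∈ Set.Icc (0:ℝ) 1, ∀ s' ∈ Set.Icc (0:ℝ) 1,
      ‖γ s - γ s'‖ ≤ 10*|s - s'| := by
    intro s hs s' hs'
    have hw : ‖v s - v s'‖ ≤ |s - s'| := by
      have h : v s - v s' = ((s:ℂ) - (s':ℂ))*(b - a) := by rw [hvdef]; ring
      rw [h, norm_mul]
      have h1 : ‖(s:ℂ) - (s':ℂ)‖ = |s - s'| := by
        rw [← Complex.ofReal_sub, Complex.norm_real, Real.norm_eq_abs]
      rw [h1, norm_sub_rev b a]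
      have h2 : ‖a - b‖ ≤ 1 := by
        linarith only [habhalf, hnale]
      calc |s - s'| * ‖a - b‖ ≤ |s - s'| * 1 :=
            mul_le_mul_of_nonneg_left h2 (abs_nonneg _)
        _ = |s - s'| := mul_one _
    have hvs := hv_up s hs
    have hvs' := hv_up s' hs'
    have hva : ‖v s‖ ≤ 3/2 := by linarith only [hvs, hnale]
    have hva' : ‖v s'‖ ≤ 3/2 := by linarith only [hvs', hnale]
    have hsub : γ s - γ s' = mk2 ((v s)^2 - (v s')^2) ((v s)^3 - (v s')^3) := by
      rw [hγdef, sub_mk2]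
    have he1 : ‖(v s)^2 - (v s')^2‖ ≤ 3*|s - s'| := by
      have hf : (v s)^2 - (v s')^2 = (v s - v s') * (v s + v s') := by ring
      rw [hf, norm_mul]
      have hb1 : ‖v s + v s'‖ ≤ 3 := by
        have n1 := norm_add_le (v s) (v s')
        linarith only [n1, hva, hva']
      calc ‖v s - v s'‖ * ‖v s + v s'‖ ≤ |s - s'| * 3 := by
            apply mul_le_mul hw hb1 (norm_nonneg _) (abs_nonneg _)
        _ = 3*|s - s'| := by ring
    have he2 : ‖(v s)^3 - (v s')^3‖ ≤ 7*|s - s'| := by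
      have hf : (v s)^3 - (v s')^3 = (v s - v s') * ((v s)^2 + (v s)*(v s') + (v s')^2) := by
        ring
      rw [hf, norm_mul]
      have hb1 : ‖(v s)^2 + (v s)*(v s') + (v s')^2‖ ≤ 7 := by
        have h4 : ‖(v s)^2 + (v s)*(v s') + (v s')^2‖
            ≤ ‖(v s)^2‖ + ‖(v s)*(v s')‖ + ‖(v s')^2‖ := by
          calc ‖(v s)^2 + (v s)*(v s') + (v s')^2‖
              ≤ ‖(v s)^2 + (v s)*(v s')‖ + ‖(v s')^2‖ := norm_add_le _ _
            _ ≤ ‖(v s)^2‖ + ‖(v s)*(v s')‖ + ‖(v s')^2‖ := by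
                linarith [norm_add_le ((v s)^2) ((v s)*(v s'))]
        rw [norm_pow, norm_pow, norm_mul] at h4
        nlinarith only [h4, hva, hva', norm_nonneg (v s), norm_nonneg (v s')]
      calc ‖v s - v s'‖ * ‖(v s)^2 + (v s)*(v s') + (v s')^2‖ ≤ |s - s'| * 7 := by
            apply mul_le_mul hw hb1 (norm_nonneg _) (abs_nonneg _)
        _ = 7*|s - s'| := by ring
    calc ‖γ s - γ s'‖ = ‖mk2 ((v s)^2 - (v s')^2) ((v s)^3 - (v s')^3)‖ := by rw [hsub]
      _ ≤ ‖(v s)^2 - (v s')^2‖ + ‖(v s)^3 - (v s')^3‖ := norm_mk2_le _ _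
      _ ≤ 10*|s - s'| := by linarith only [he1, he2, abs_nonneg (s - s')]
  -- continuity of the coordinates of q
  have hqcont : ∀ i : Fin 2, ContinuousOn (fun s => q s i) (Set.Icc (0:ℝ) 1) := by
    intro i
    rw [Metric.continuousOn_iff]
    intro s hs ε hε
    refine ⟨(ε/2)^((1:ℝ)/α)/(c*10), by positivity, fun s' hs' hdist => ?_⟩
    have hγd : ‖γ s' - γ s‖ ≤ 10*|s' - s| := hγlip s' hs' s hs
    have hds : |s' - s| < (ε/2)^((1:ℝ)/α)/(c*10) := by
      rwa [Real.dist_eq] at hdist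
    have h1 : c * ‖γ s' - γ s‖ ≤ (ε/2)^((1:ℝ)/α) := by
      have h2 : c * (10*|s' - s|) ≤ (ε/2)^((1:ℝ)/α) := by
        rw [div_eq_inv_mul] at hds
        have h3 : |s' - s| * (c*10) < (ε/2)^((1:ℝ)/α) := by
          rw [← lt_div_iff₀ (by positivity)]
          rwa [div_eq_inv_mul]
        linarith only [h3]
      calc c * ‖γ s' - γ s‖ ≤ c * (10*|s' - s|) :=
            mul_le_mul_of_nonneg_left hγd hc.le
        _ ≤ (ε/2)^((1:ℝ)/α) := h2
    have h4 : ‖q s' - q s‖ ≤ ε/2 := by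
      have h5 := hq_dist s' hs' s hs
      have h6 : (c*‖γ s' - γ s‖)^α ≤ ((ε/2)^((1:ℝ)/α))^α :=
        Real.rpow_le_rpow (by positivity) h1 hα.le
      rw [← Real.rpow_mul (by positivity), one_div, inv_mul_cancel₀ hα.ne',
        Real.rpow_one] at h6
      linarith only [h5, h6]
    have h7 : dist (q s' i) (q s i) ≤ ‖q s' - q s‖ := by
      rw [dist_eq_norm, ← sub_apply2]
      exact coord_le_norm _ _
    linarith only [h4, h7, hε]
  -- the real function for IVT
  set g : ℝ → ℝ := fun s => ((q s 1) / (q s 0)^2).re with hgdef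
  have hgcont : ContinuousOn g (Set.Icc (0:ℝ) 1) := by
    apply Complex.continuous_re.comp_continuousOn
    exact (hqcont 1).div ((hqcont 0).pow 2) (fun s hs => pow_ne_zero 2 (hqx_ne s hs))
  have hg0 : g 0 = t := by
    rw [hgdef]
    simp only [hq0]
    rw [hpdef, mk2_apply_zero, mk2_apply_one]
    have h : τ^5/(τ^2)^2 = τ := by
      field_simp
    rw [h, hτdef, Complex.ofReal_re]
  have hg1 : g 1 = -t := by
    rw [hgdef]
    simp only [hq1]
    rw [hp'def, mk2_apply_zero, mk2_apply_one]
    have h : (-τ^5)/(τ^2)^2 = -τ := by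
      field_simp
    rw [h, hτdef]
    simp
  -- intermediate value theorem
  have h0mem : (0:ℝ) ∈ Set.Icc (g 1) (g 0) := by
    rw [hg0, hg1]
    exact ⟨by linarith only [ht], by linarith only [ht]⟩
  obtain ⟨s₀, hs₀, hgs₀⟩ := intermediate_value_Icc' (by norm_num : (0:ℝ) ≤ 1) hgcont h0mem
  -- the contradiction
  have hx := hqx_ne s₀ hs₀
  have hqc : (q s₀ 1)^2 = (q s₀ 0)^5 := (hqmem s₀ hs₀).1
  set x : ℂ := q s₀ 0 with hxdef
  set y : ℂ := q s₀ 1 with hydef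
  set u : ℂ := y/x^2 with hudef
  have hu2 : u^2 = x := by
    rw [hudef, div_pow, hqc]
    field_simp
  have hure : u.re = 0 := hgs₀
  have hxre : x.re ≤ 0 := by
    rw [← hu2, sq, Complex.mul_re, hure]
    nlinarith only [sq_nonneg u.im]
  have h_low : t^(2:ℕ) ≤ ‖q s₀ - p‖ := by
    have hco : ‖(q s₀ - p) 0‖ ≤ ‖q s₀ - p‖ := coord_le_norm _ _
    have hc0 : (q s₀ - p) 0 = x - τ^2 := by
      rw [sub_apply2, hpdef, mk2_apply_zero, hxdef]
    rw [hc0] at hco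
    have hre : (x - τ^2).re = x.re - t^2 := by
      rw [Complex.sub_re]
      congr 1
      rw [hτdef, ← Complex.ofReal_pow, Complex.ofReal_re]
    have habs : |(x - τ^2).re| ≤ ‖x - τ^2‖ := Complex.abs_re_le_norm _
    have h1 : t^2 ≤ |(x - τ^2).re| := by
      rw [hre, abs_sub_comm]
      have h2 : |t^2 - x.re| = t^2 - x.re :=
        abs_of_nonneg (by linarith only [hxre, pow_pos ht 2])
      rw [h2]
      linarith only [hxre]
    linarith only [hco, habs, h1]
  have h_up : ‖q s₀ - p‖ ≤ (c*(10*d))^α := hq_p s₀ hs₀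
  have hc10 : c*(10*d) ≤ 20*c^2*t^((5:ℝ)*α) := by
    calc c*(10*d) = (10*c)*d := by ring
      _ ≤ (10*c)*(2*c*t^((5:ℝ)*α)) := mul_le_mul_of_nonneg_left hd_up (by positivity)
      _ = 20*c^2*t^((5:ℝ)*α) := by ring
  have hfin1 : (c*(10*d))^α ≤ (20*c^2*t^((5:ℝ)*α))^α :=
    Real.rpow_le_rpow (by positivity) hc10 hα.le
  have hfin2 : (20*c^2*t^((5:ℝ)*α))^α = (20*c^2)^α * t^(5*α^2) := by
    rw [Real.mul_rpow (by positivity) (by positivity)]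
    congr 1
    rw [← Real.rpow_mul ht.le]
    congr 1
    ring
  have hfin3 : (20*c^2)^α * t^(5*α^2) < t^(2:ℕ) := by
    have hsplit : t^(5*α^2) = t^(5*α^2 - 2) * t^((2:ℝ)) := by
      rw [← Real.rpow_add ht]
      congr 1
      ring
    have hpos20 : (0:ℝ) < (20*c^2)^α := by positivity
    have h1 : (20*c^2)^α * t^(5*α^2 - 2) < 1 := by
      calc (20*c^2)^α * t^(5*α^2 - 2) < (20*c^2)^α * ((20*c^2)^α)⁻¹ :=
            mul_lt_mul_of_pos_left cond5 hpos20
        _ = 1 := by field_simp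
    calc (20*c^2)^α * t^(5*α^2)
        = ((20*c^2)^α * t^(5*α^2 - 2)) * t^((2:ℝ)) := by rw [hsplit]; ring
      _ < 1 * t^((2:ℝ)) := by
          apply mul_lt_mul_of_pos_right h1 (by positivity)
      _ = t^(2:ℕ) := by rw [one_mul, hrp2]
  linarith only [h_low, h_up, hfin1, hfin3, hfin2.le, hfin2.ge]
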